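/- Let t, s be positive reals satisfying t² − t(2s+1) + 4s² − 2s < 0 and s² ≤ t. Then t < 1 + 2/√3. -/
import Mathlib

theorem ellipse_parabola_bound (t s : ℝ) (ht : 0 < t) (hs : 0 < s)
    (h1 : t ^ 2 - t * (2 * s + 1) + 4 * s ^ 2 - 2 * s < 0) (h2 : s ^ 2 ≤ t) :
    t < 1 + 2 / Real.sqrt 3 := by
  have hr : Real.sqrt 3 > 0 := Real.sqrt_pos.mpr (by norm_num)
  have hr2 : Real.sqrt 3 ^ 2 = 3 := Real.sq_sqrt (by norm_num)
  have key : 3 * t ^ 2 - 6 * t - 1 < 0 := by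
    nlinarith [sq_nonneg (4 * s - (t + 1))]
  rw [← sub_lt_iff_lt_add', div_eq_mul_inv, ← div_eq_mul_inv, lt_div_iff₀ hr]
  nlinarith [sq_nonneg (Real.sqrt 3 * (t - 1) - 2)]
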